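/- Let P be a countable Köthe set on a set I with P ≺ P², and let A = λ(P) with pointwise multiplication. If A² = A, where A² is the linear span of {ab : a, b ∈ A}, then P ∼ P² (i.e., P satisfies condition (B): for each p ∈ P there exist q ∈ P and C > 0 with q_i² ≤ C p_i for all i, in addition to P ≺ P²). -/

import Mathlib

/-- If `P` is a countable Köthe set with `P ≺ P²` and the algebra
`A = λ(P)` satisfies `A² = A` (where `A²` is the linear span of products), then `P`
satisfies condition (B), i.e. `P ∼ P²`. -/
theorem kothe_condB_of_idempotent {I : Type*} (P : Set (I → ℝ))
    (hPcount : P.Countable)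
    (hP0 : ∀ p ∈ P, ∀ i, 0 ≤ p i)
    (hP1 : ∀ i, ∃ p ∈ P, 0 < p i)
    (hP2 : ∀ p ∈ P, ∀ q ∈ P, ∃ r ∈ P, ∀ i, max (p i) (q i) ≤ r i)
    (hPP2 : ∀ p ∈ P, ∃ q ∈ P, ∃ C : ℝ, 0 < C ∧ ∀ i, p i ≤ C * (q i) ^ 2)
    (Λ : Set (I → ℂ))
    (hΛ : Λ = {x | ∀ p ∈ P, Summable fun i => ‖x i‖ * p i})
    (hA2 : ∀ a ∈ Λ, a ∈ Submodule.span ℂ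
      {x : I → ℂ | ∃ b ∈ Λ, ∃ c ∈ Λ, x = fun i => b i * c i}) :
    ∀ q ∈ P, ∃ p ∈ P, ∃ C : ℝ, 0 < C ∧ ∀ i, (q i) ^ 2 ≤ C * p i := by
  classical
  intro q hq
  by_contra hcon
  push_neg at hcon
  -- hcon : ∀ p ∈ P, ∀ C : ℝ, 0 < C → ∃ i, C * p i < q i ^ 2
  obtain ⟨f, hfP⟩ := Set.Countable.exists_eq_range hPcount ⟨q, hq⟩
  have hf : ∀ n, f n ∈ P := by intro n; rw [hfP]; exact ⟨n, rfl⟩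
  -- a dominating increasing sequence in P
  have hRex : ∀ p : {g // g ∈ P}, ∀ p' : {g // g ∈ P}, ∃ r : {g // g ∈ P},
      (∀ i, p.1 i ≤ r.1 i) ∧ (∀ i, p'.1 i ≤ r.1 i) := by
    rintro ⟨p, hp⟩ ⟨p', hp'⟩
    obtain ⟨r, hr, h⟩ := hP2 p hp p' hp'
    exact ⟨⟨r, hr⟩, fun i => (le_max_left _ _).trans (h i),
      fun i => (le_max_right _ _).trans (h i)⟩
  choose R hR1 hR2 using hRex
  let r : ℕ → {g // g ∈ P} := fun n => Nat.rec (R ⟨q, hq⟩ ⟨f 0, hf 0⟩)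
    (fun n prev => R prev ⟨f (n+1), hf (n+1)⟩) n
  have hrq : ∀ n i, q i ≤ (r n).1 i := by
    intro n
    induction n with
    | zero => exact hR1 ⟨q, hq⟩ ⟨f 0, hf 0⟩
    | succ n ih => exact fun i => (ih i).trans (hR1 (r n) ⟨f (n+1), hf (n+1)⟩ i)
  have hrf : ∀ m n, m ≤ n → ∀ i, f m i ≤ (r n).1 i := by
    intro m n
    induction n with
    | zero =>
      intro hmn
      obtain rfl : m = 0 := Nat.le_zero.mp hmn
      exact hR2 ⟨q, hq⟩ ⟨f 0, hf 0⟩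
    | succ n ih =>
      intro hmn
      rcases Nat.lt_or_ge m (n+1) with h | h
      · exact fun i => (ih (Nat.lt_succ_iff.mp h) i).trans
          (hR1 (r n) ⟨f (n+1), hf (n+1)⟩ i)
      · obtain rfl : m = n+1 := le_antisymm hmn h
        exact hR2 (r n) ⟨f (n+1), hf (n+1)⟩
  -- choose bad indices
  have hidxex : ∀ n : ℕ, ∃ i, ((n:ℝ)+1)^4 * (r n).1 i < q i ^ 2 := fun n =>
    hcon (r n).1 (r n).2 _ (by positivity)
  choose idx hidx using hidxex
  have hq2pos : ∀ n, 0 < q (idx n) ^ 2 := fun n =>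
    lt_of_le_of_lt (mul_nonneg (by positivity) (hP0 _ (r n).2 _)) (hidx n)
  have hqpos : ∀ n, 0 < q (idx n) := by
    intro n
    rcases lt_or_eq_of_le (hP0 q hq (idx n)) with h | h
    · exact h
    · exfalso; have := hq2pos n; rw [← h] at this; simp at this
  have hqlt : ∀ n : ℕ, ((n:ℝ)+1)^4 < q (idx n) := by
    intro n
    have h1 : ((n:ℝ)+1)^4 * q (idx n) ≤ ((n:ℝ)+1)^4 * (r n).1 (idx n) :=
      mul_le_mul_of_nonneg_left (hrq n (idx n)) (by positivity)
    have h2 : ((n:ℝ)+1)^4 * q (idx n) < q (idx n) * q (idx n) := by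
      have := h1.trans_lt (hidx n); rwa [sq] at this
    exact lt_of_mul_lt_mul_right h2 (hqpos n).le
  -- the "level" function N
  have hSbdd : ∀ i, BddAbove {n : ℕ | idx n = i} := by
    intro i
    refine ⟨Nat.floor (q i), fun n hn => ?_⟩
    have hn' : idx n = i := hn
    have h1 : (n:ℝ) ≤ ((n:ℝ)+1)^4 := by
      have h1' : ((n:ℝ)+1) ≤ ((n:ℝ)+1)^4 := le_self_pow₀ (by linarith [Nat.cast_nonneg (α := ℝ) n]) (by norm_num)
      linarith
    have h2 : (n:ℝ) ≤ q i := by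
      have := hqlt n; rw [hn'] at this; linarith
    exact Nat.le_floor h2
  set N : I → ℕ := fun i => sSup {n : ℕ | idx n = i} with hN
  have hNmem : ∀ n, idx (N (idx n)) = idx n := fun n =>
    Nat.sSup_mem (s := {k : ℕ | idx k = idx n}) ⟨n, rfl⟩ (hSbdd (idx n))
  have hNge : ∀ n, n ≤ N (idx n) := fun n =>
    le_csSup (s := {k : ℕ | idx k = idx n}) (hSbdd (idx n)) rfl
  set α : I → ℝ := fun i => if ∃ n, idx n = i then ((N i : ℝ) + 1) / q i ^ 2 else 0 with hαdef
  have hα0 : ∀ i, 0 ≤ α i := by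
    intro i
    simp only [hαdef]
    split
    · positivity
    · exact le_refl 0
  have hαidx : ∀ n, α (idx n) = ((N (idx n) : ℝ) + 1) / q (idx n) ^ 2 := by
    intro n
    simp only [hαdef]
    rw [if_pos (⟨n, rfl⟩ : ∃ k, idx k = idx n)]
  set a : I → ℂ := fun i => (α i : ℂ) with hadef
  have habs : ∀ i, ‖a i‖ = α i := by
    intro i; rw [hadef]; exact (Complex.norm_real _).trans (abs_of_nonneg (hα0 i))
  -- a ∈ Λ
  have haΛ : a ∈ Λ := by
    rw [hΛ]
    intro p hp
    have hp' : p ∈ Set.range f := by rw [← hfP]; exact hp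
    obtain ⟨m, rfl⟩ := hp'
    have heq : (fun i => ‖a i‖ * f m i) = fun i => α i * f m i := by
      funext i; rw [habs]
    rw [heq]
    set g : ℕ → ℝ := fun n => ((n:ℝ)+1) / q (idx n) ^ 2 * f m (idx n) with hg
    have hg0 : ∀ n, 0 ≤ g n := fun n =>
      mul_nonneg (div_nonneg (by positivity) (by positivity)) (hP0 _ (hf m) _)
    have hgle : ∀ n, m ≤ n → g n ≤ 1/((n:ℝ)+1)^3 := by
      intro n hmn
      have h1 : f m (idx n) ≤ (r n).1 (idx n) := hrf m n hmn (idx n)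
      have h2 : ((n:ℝ)+1)^4 * f m (idx n) < q (idx n) ^ 2 :=
        lt_of_le_of_lt (mul_le_mul_of_nonneg_left h1 (by positivity)) (hidx n)
      have hq2 := hq2pos n
      simp only [hg]
      rw [div_mul_eq_mul_div, div_le_div_iff₀ hq2 (by positivity)]
      nlinarith [h2]
    have hcmp : Summable (fun n : ℕ => 1 / ((n:ℝ)+1) ^ 3) := by
      have := (summable_nat_add_iff (f := fun n : ℕ => 1 / (n:ℝ) ^ 3) 1).mpr
        (Real.summable_one_div_nat_pow.mpr (by norm_num))
      simpa using this
    have hgsum : Summable g := by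
      rw [← summable_nat_add_iff m]
      refine Summable.of_nonneg_of_le (fun n => hg0 _) (fun n => ?_) hcmp
      have h1 : g (n + m) ≤ 1/(((n+m:ℕ):ℝ)+1)^3 := hgle _ (Nat.le_add_left m n)
      refine h1.trans ?_
      have h2 : ((n:ℝ)+1)^3 ≤ (((n+m:ℕ):ℝ)+1)^3 := by
        push_cast
        have hm0 : (0:ℝ) ≤ (m:ℝ) := Nat.cast_nonneg m
        exact pow_le_pow_left₀ (by positivity) (by linarith) 3
      exact one_div_le_one_div_of_le (by positivity) h2
    refine summable_of_sum_le (c := ∑' n, g n)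
      (fun i => mul_nonneg (hα0 i) (hP0 _ (hf m) i)) ?_
    intro F
    have hzero : ∀ i ∈ F, i ∉ F.filter (fun i => ∃ n, idx n = i) → α i * f m i = 0 := by
      intro i hi hni
      have : ¬ ∃ n, idx n = i := by
        intro h; exact hni (Finset.mem_filter.mpr ⟨hi, h⟩)
      simp only [hαdef]
      rw [if_neg this, zero_mul]
    have hstep1 : ∑ i ∈ F, α i * f m i
        = ∑ i ∈ F.filter (fun i => ∃ n, idx n = i), α i * f m i :=
      (Finset.sum_subset (Finset.filter_subset _ _) hzero).symm
    have hkey : ∀ i ∈ F.filter (fun i => ∃ n, idx n = i), α i * f m i = g (N i) := by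
      intro i hi
      obtain ⟨-, n, rfl⟩ := Finset.mem_filter.mp hi
      rw [hαidx n]
      simp only [hg, hNmem n]
    have hstep2 : ∑ i ∈ F.filter (fun i => ∃ n, idx n = i), α i * f m i
        = ∑ i ∈ F.filter (fun i => ∃ n, idx n = i), g (N i) :=
      Finset.sum_congr rfl hkey
    have hinj : ∀ x ∈ F.filter (fun i => ∃ n, idx n = i),
        ∀ y ∈ F.filter (fun i => ∃ n, idx n = i), N x = N y → x = y := by
      intro x hx y hy hxy
      obtain ⟨-, nx, rfl⟩ := Finset.mem_filter.mp hx
      obtain ⟨-, ny, rfl⟩ := Finset.mem_filter.mp hy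
      calc idx nx = idx (N (idx nx)) := (hNmem nx).symm
        _ = idx (N (idx ny)) := by rw [hxy]
        _ = idx ny := hNmem ny
    have hstep3 : ∑ i ∈ F.filter (fun i => ∃ n, idx n = i), g (N i)
        = ∑ n ∈ (F.filter (fun i => ∃ n, idx n = i)).image N, g n :=
      (Finset.sum_image hinj).symm
    rw [hstep1, hstep2, hstep3]
    exact Summable.sum_le_tsum _ (fun n _ => hg0 n) hgsum
  -- every element of the span is "q²-bounded"
  have hbdd : ∀ x ∈ Submodule.span ℂ
      {x : I → ℂ | ∃ b ∈ Λ, ∃ c ∈ Λ, x = fun i => b i * c i},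
      ∃ K : ℝ, ∀ i, ‖x i‖ * q i ^ 2 ≤ K := by
    intro x hx
    induction hx using Submodule.span_induction with
    | mem x hx =>
      obtain ⟨b, hb, c, hc, rfl⟩ := hx
      rw [hΛ] at hb hc
      have hbs := hb q hq
      have hcs := hc q hq
      refine ⟨(∑' j, ‖b j‖ * q j) * (∑' j, ‖c j‖ * q j),
        fun i => ?_⟩
      have h1 : ‖b i‖ * q i ≤ ∑' j, ‖b j‖ * q j :=
        Summable.le_tsum hbs i (fun j _ => mul_nonneg (norm_nonneg _) (hP0 q hq j))
      have h2 : ‖c i‖ * q i ≤ ∑' j, ‖c j‖ * q j :=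
        Summable.le_tsum hcs i (fun j _ => mul_nonneg (norm_nonneg _) (hP0 q hq j))
      have heq : ‖b i * c i‖ * q i ^ 2
          = (‖b i‖ * q i) * (‖c i‖ * q i) := by
        rw [norm_mul]; ring
      rw [heq]
      exact mul_le_mul h1 h2
        (mul_nonneg (norm_nonneg _) (hP0 q hq i))
        (le_trans (mul_nonneg (norm_nonneg _) (hP0 q hq i)) h1)
    | zero => exact ⟨0, by simp⟩
    | add x y hx hy ihx ihy =>
      obtain ⟨K1, hK1⟩ := ihx
      obtain ⟨K2, hK2⟩ := ihy
      refine ⟨K1 + K2, fun i => ?_⟩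
      have htri : ‖x i + y i‖ ≤ ‖x i‖ + ‖y i‖ :=
        norm_add_le _ _
      have := add_le_add (hK1 i) (hK2 i)
      have h2 : ‖x i + y i‖ * q i ^ 2
          ≤ (‖x i‖ + ‖y i‖) * q i ^ 2 :=
        mul_le_mul_of_nonneg_right htri (by positivity)
      calc ‖(x + y) i‖ * q i ^ 2
          = ‖x i + y i‖ * q i ^ 2 := rfl
        _ ≤ (‖x i‖ + ‖y i‖) * q i ^ 2 := h2
        _ = ‖x i‖ * q i ^ 2 + ‖y i‖ * q i ^ 2 := by ring
        _ ≤ K1 + K2 := this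
    | smul c x hx ih =>
      obtain ⟨K, hK⟩ := ih
      refine ⟨‖c‖ * K, fun i => ?_⟩
      calc ‖(c • x) i‖ * q i ^ 2
          = ‖c‖ * (‖x i‖ * q i ^ 2) := by
            simp [Pi.smul_apply, map_mul, mul_assoc]
        _ ≤ ‖c‖ * K :=
            mul_le_mul_of_nonneg_left (hK i) (norm_nonneg _)
  obtain ⟨K, hK⟩ := hbdd a (hA2 a haΛ)
  obtain ⟨n, hn⟩ := exists_nat_gt K
  have h1 := hK (idx n)
  have h2 : ‖a (idx n)‖ * q (idx n) ^ 2 = (N (idx n) : ℝ) + 1 := by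
    rw [habs, hαidx n, div_mul_cancel₀ _ (ne_of_gt (hq2pos n))]
  rw [h2] at h1
  have h3 : (n:ℝ) ≤ (N (idx n) : ℝ) := Nat.cast_le.mpr (hNge n)
  linarith
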